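/- Let n ≥ 2. For every L > 0 there exists a probability measure ν on S^n_+ with a positive continuous density with respect to σ_+ such that there is no bijective map T : S^n_+ → S^n_+ which is L-Lipschitz with respect to the geodesic distance and satisfies T_#σ_+ = ν. In other words, no uniform Lipschitz bound holds for bijective transport maps from σ_+ onto probability measures with positive continuous densities on the half-sphere. -/

import Mathlib

open MeasureTheory Real

noncomputable section

/-- Euclidean space `ℝ^{n+1}`. -/
abbrev Euc (n : ℕ) := EuclideanSpace ℝ (Fin (n + 1))

/-- The unit sphere `S^n ⊆ ℝ^{n+1}`. -/
def unitSphere (n : ℕ) : Set (Euc n) := Metric.sphere 0 1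

/-- The closed upper half-sphere `S^n_+`. -/
def upperHemi (n : ℕ) : Set (Euc n) := {x ∈ unitSphere n | 0 ≤ x (Fin.last n)}

/-- The equator `C = S^n_+ ∩ {x_{n+1} = 0}`. -/
def equator (n : ℕ) : Set (Euc n) := {x ∈ upperHemi n | x (Fin.last n) = 0}

/-- The geodesic distance on the sphere: `d(x,y) = arccos (x ⬝ y)`. -/
def geod {n : ℕ} (x y : Euc n) : ℝ := Real.arccos (inner ℝ x y)

/-- The north pole `N = (0,…,0,1)`. -/
def northPole (n : ℕ) : Euc n := EuclideanSpace.single (Fin.last n) 1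

/-- The uniform probability measure `σ_+` on the upper half-sphere, i.e. the normalized
restriction to `S^n_+` of the `n`-dimensional Hausdorff measure. -/
def sigmaPlus (n : ℕ) : Measure (Euc n) :=
  ((μH[n] : Measure (Euc n)) (upperHemi n))⁻¹ • (μH[n] : Measure (Euc n)).restrict (upperHemi n)

open Metric Set

variable {n : ℕ}

lemma euc_norm_sq {m : ℕ} (x : EuclideanSpace ℝ (Fin m)) :
    ‖x‖ ^ 2 = ∑ i, x i ^ 2 := by
  rw [EuclideanSpace.norm_eq, Real.sq_sqrt (by positivity)]
  simp [sq_abs]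

lemma euc_dist_sq {m : ℕ} (x y : EuclideanSpace ℝ (Fin m)) :
    dist x y ^ 2 = ∑ i, (x i - y i) ^ 2 := by
  rw [EuclideanSpace.dist_eq, Real.sq_sqrt (by positivity)]
  simp [Real.dist_eq, sq_abs]

lemma mem_hemi_iff {x : Euc n} :
    x ∈ upperHemi n ↔ ‖x‖ = 1 ∧ 0 ≤ x (Fin.last n) := by
  simp [upperHemi, unitSphere, mem_sphere_iff_norm]

lemma abs_coord_le_norm {m : ℕ} (x : EuclideanSpace ℝ (Fin m)) (j : Fin m) :
    |x j| ≤ ‖x‖ := by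
  have h1 : (x j) ^ 2 ≤ ‖x‖ ^ 2 := by
    rw [euc_norm_sq]
    exact Finset.single_le_sum (f := fun i => x i ^ 2) (fun i _ => sq_nonneg _)
      (Finset.mem_univ j)
  have := Real.sqrt_le_sqrt h1
  rwa [Real.sqrt_sq_eq_abs, Real.sqrt_sq (norm_nonneg x)] at this

def projE (n : ℕ) : Euc n → EuclideanSpace ℝ (Fin n) :=
  fun x => (WithLp.equiv 2 _).symm (fun i => x (Fin.castSucc i))

def liftE (n : ℕ) : EuclideanSpace ℝ (Fin n) → Euc n :=
  fun u => (WithLp.equiv 2 _).symm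
    (Fin.snoc (WithLp.equiv 2 _ u) (Real.sqrt (1 - ‖u‖ ^ 2)))

@[simp] lemma projE_apply (x : Euc n) (i : Fin n) : projE n x i = x (Fin.castSucc i) := rfl

@[simp] lemma liftE_last (u : EuclideanSpace ℝ (Fin n)) :
    liftE n u (Fin.last n) = Real.sqrt (1 - ‖u‖ ^ 2) := by
  simp [liftE]

@[simp] lemma liftE_castSucc (u : EuclideanSpace ℝ (Fin n)) (i : Fin n) :
    liftE n u (Fin.castSucc i) = u i := by
  simp [liftE]

lemma projE_liftE (u : EuclideanSpace ℝ (Fin n)) : projE n (liftE n u) = u := by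
  ext i
  simp

lemma lipschitz_projE : LipschitzWith 1 (projE n) := by
  apply LipschitzWith.of_dist_le_mul
  intro x y
  rw [NNReal.coe_one, one_mul, EuclideanSpace.dist_eq, EuclideanSpace.dist_eq]
  apply Real.sqrt_le_sqrt
  rw [Fin.sum_univ_castSucc]
  have : (0:ℝ) ≤ dist (x (Fin.last n)) (y (Fin.last n)) ^ 2 := sq_nonneg _
  simp only [projE_apply]
  linarith

lemma norm_projE_le (x : Euc n) : ‖projE n x‖ ≤ ‖x‖ := by
  have := lipschitz_projE (n := n).dist_le_mul x 0
  have h0 : projE n 0 = 0 := by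
    ext i; simp
  rw [h0, dist_zero_right, dist_zero_right, NNReal.coe_one, one_mul] at this
  exact this

lemma norm_sq_split (x : Euc n) :
    ‖x‖ ^ 2 = ‖projE n x‖ ^ 2 + x (Fin.last n) ^ 2 := by
  rw [euc_norm_sq, euc_norm_sq, Fin.sum_univ_castSucc]
  simp

lemma dist_sq_split (x y : Euc n) :
    dist x y ^ 2 = dist (projE n x) (projE n y) ^ 2
      + (x (Fin.last n) - y (Fin.last n)) ^ 2 := by
  rw [euc_dist_sq, euc_dist_sq, Fin.sum_univ_castSucc]
  simp

lemma hemi_last_eq {x : Euc n} (hx : x ∈ upperHemi n) :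
    x (Fin.last n) = Real.sqrt (1 - ‖projE n x‖ ^ 2) := by
  obtain ⟨hn, hpos⟩ := mem_hemi_iff.mp hx
  have h := norm_sq_split x
  rw [hn] at h
  have : x (Fin.last n) ^ 2 = 1 - ‖projE n x‖ ^ 2 := by linarith [h]
  rw [← this, Real.sqrt_sq hpos]

lemma sqrt_sub_sqrt_sq_le {a b : ℝ} (ha : 0 ≤ a) (hb : 0 ≤ b) :
    (Real.sqrt a - Real.sqrt b) ^ 2 ≤ |a - b| := by
  rcases le_total b a with h | h
  · rw [abs_of_nonneg (by linarith)]
    have h1 : Real.sqrt b * Real.sqrt b ≤ Real.sqrt a * Real.sqrt b :=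
      mul_le_mul_of_nonneg_right (Real.sqrt_le_sqrt h) (Real.sqrt_nonneg b)
    have h2 : Real.sqrt a * Real.sqrt a = a := Real.mul_self_sqrt ha
    have h3 : Real.sqrt b * Real.sqrt b = b := Real.mul_self_sqrt hb
    nlinarith
  · rw [abs_of_nonpos (by linarith)]
    have h1 : Real.sqrt a * Real.sqrt a ≤ Real.sqrt b * Real.sqrt a :=
      mul_le_mul_of_nonneg_right (Real.sqrt_le_sqrt h) (Real.sqrt_nonneg a)
    have h2 : Real.sqrt a * Real.sqrt a = a := Real.mul_self_sqrt ha
    have h3 : Real.sqrt b * Real.sqrt b = b := Real.mul_self_sqrt hb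
    nlinarith

lemma haar_euc (m : ℕ) :
    Measure.IsAddHaarMeasure (μH[(m:ℝ)] : Measure (EuclideanSpace ℝ (Fin m))) := by
  have h : ((m : ℝ)) = ((Module.finrank ℝ (EuclideanSpace ℝ (Fin m)) : ℕ) : ℝ) := by
    rw [finrank_euclideanSpace_fin]
  rw [h]
  infer_instance

set_option maxHeartbeats 1000000 in
lemma lemmaC {x₀ : Euc n} (hx₀ : x₀ ∈ upperHemi n) {δ : ℝ} (hδ0 : 0 < δ) (hδ1 : δ ≤ 1) :
    (μH[(n:ℝ)] : Measure (EuclideanSpace ℝ (Fin n))) (Metric.closedBall 0 (δ^2/6))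
      ≤ (μH[(n:ℝ)] : Measure (Euc n)) (upperHemi n ∩ Metric.closedBall x₀ δ) := by
  have := haar_euc n
  set s : ℝ := δ ^ 2 / 3 with hs
  have hs0 : 0 < s := by positivity
  have hs1 : s ≤ 1 / 3 := by
    rw [hs]
    nlinarith
  set p := projE n x₀ with hp
  have hx₀n : ‖x₀‖ = 1 := (mem_hemi_iff.mp hx₀).1
  have hpn : ‖p‖ ≤ 1 := by
    have := norm_projE_le x₀
    rw [hx₀n] at this; exact this
  set q : EuclideanSpace ℝ (Fin n) := (1 - s / 2) • p with hq
  set K := Metric.closedBall q (s / 2) with hK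
  -- step 1 : liftE '' K ⊆ hemi ∩ ball
  have hsub : liftE n '' K ⊆ upperHemi n ∩ Metric.closedBall x₀ δ := by
    rintro - ⟨u, huK, rfl⟩
    have hqn : ‖q‖ ≤ 1 - s / 2 := by
      rw [hq, norm_smul]
      have : |1 - s / 2| = 1 - s / 2 := abs_of_nonneg (by linarith)
      rw [Real.norm_eq_abs, this]
      nlinarith [norm_nonneg p]
    have huq : dist u q ≤ s / 2 := mem_closedBall.mp huK
    have hun : ‖u‖ ≤ 1 := by
      calc ‖u‖ ≤ ‖u - q‖ + ‖q‖ := by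
            simpa using norm_add_le (u - q) q
      _ ≤ s / 2 + (1 - s / 2) := by
          rw [← dist_eq_norm]
          exact add_le_add huq hqn
      _ = 1 := by ring
    have hup : dist u p ≤ s := by
      calc dist u p ≤ dist u q + dist q p := dist_triangle _ _ _
      _ ≤ s / 2 + s / 2 := by
          apply add_le_add huq
          have : q - p = (-(s/2)) • p := by
            rw [hq]
            module
          rw [dist_eq_norm, this, norm_smul, Real.norm_eq_abs, abs_neg,
            abs_of_nonneg (by linarith : (0:ℝ) ≤ s/2)]
          nlinarith [norm_nonneg p]
      _ = s := by ring
    have hu2 : ‖u‖ ^ 2 ≤ 1 := by nlinarith [norm_nonneg u]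
    have hlift_norm : ‖liftE n u‖ = 1 := by
      have h2 : ‖liftE n u‖ ^ 2 = 1 := by
        rw [norm_sq_split, projE_liftE, liftE_last, Real.sq_sqrt (by linarith)]
        ring
      nlinarith [norm_nonneg (liftE n u)]
    constructor
    · exact mem_hemi_iff.mpr ⟨hlift_norm, by rw [liftE_last]; positivity⟩
    · -- distance estimate
      rw [mem_closedBall]
      have hx₀last : x₀ (Fin.last n) = Real.sqrt (1 - ‖p‖ ^ 2) := hemi_last_eq hx₀
      have hd2 : dist (liftE n u) x₀ ^ 2 ≤ 3 * s := by
        rw [dist_sq_split, projE_liftE, liftE_last, hx₀last, ← hp]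
        have h1 : dist u p ^ 2 ≤ s ^ 2 := by nlinarith [dist_nonneg (x := u) (y := p)]
        have h2 : (Real.sqrt (1 - ‖u‖ ^ 2) - Real.sqrt (1 - ‖p‖ ^ 2)) ^ 2
            ≤ |(1 - ‖u‖ ^ 2) - (1 - ‖p‖ ^ 2)| := by
          apply sqrt_sub_sqrt_sq_le (by linarith) (by nlinarith [norm_nonneg p])
        have h3 : |(1 - ‖u‖ ^ 2) - (1 - ‖p‖ ^ 2)| ≤ 2 * s := by
          have habs : |‖p‖ - ‖u‖| ≤ dist u p := by
            rw [dist_comm, dist_eq_norm]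
            exact abs_norm_sub_norm_le p u
          have h4 : |(1 - ‖u‖ ^ 2) - (1 - ‖p‖ ^ 2)| = |‖p‖ - ‖u‖| * (‖p‖ + ‖u‖) := by
            rw [← abs_of_nonneg (by positivity : (0:ℝ) ≤ ‖p‖ + ‖u‖), ← abs_mul]
            ring_nf
          rw [h4]
          nlinarith [abs_nonneg (‖p‖ - ‖u‖), norm_nonneg p, norm_nonneg u]
        nlinarith
      have : dist (liftE n u) x₀ ^ 2 ≤ δ ^ 2 := by
        rw [hs] at hd2; linarith
      nlinarith [dist_nonneg (x := liftE n u) (y := x₀)]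
  -- step 2 : measure chain
  have hKeq : (μH[(n:ℝ)] : Measure (EuclideanSpace ℝ (Fin n))) (Metric.closedBall 0 (δ^2/6))
      = μH[(n:ℝ)] K := by
    rw [hK, show δ^2/6 = s/2 by rw [hs]; ring]
    exact (Measure.addHaar_closedBall_center _ q (s/2)).symm
  have hKle : (μH[(n:ℝ)] : Measure (EuclideanSpace ℝ (Fin n))) K
      ≤ (μH[(n:ℝ)] : Measure (Euc n)) (liftE n '' K) := by
    have himg : K ⊆ projE n '' (liftE n '' K) := by
      intro u hu
      exact ⟨liftE n u, ⟨u, hu, rfl⟩, projE_liftE u⟩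
    have h2 := lipschitz_projE.hausdorffMeasure_image_le
      (by positivity : (0:ℝ) ≤ (n:ℝ)) (liftE n '' K)
    calc (μH[(n:ℝ)] : Measure (EuclideanSpace ℝ (Fin n))) K
        ≤ μH[(n:ℝ)] (projE n '' (liftE n '' K)) := measure_mono himg
      _ ≤ (μH[(n:ℝ)] : Measure (Euc n)) (liftE n '' K) := by
          simpa using h2
  calc (μH[(n:ℝ)] : Measure (EuclideanSpace ℝ (Fin n))) (Metric.closedBall 0 (δ^2/6))
      = μH[(n:ℝ)] K := hKeq
    _ ≤ (μH[(n:ℝ)] : Measure (Euc n)) (liftE n '' K) := hKle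
    _ ≤ (μH[(n:ℝ)] : Measure (Euc n)) (upperHemi n ∩ Metric.closedBall x₀ δ) :=
        measure_mono hsub

def liftS (n : ℕ) (c : ℝ) : EuclideanSpace ℝ (Fin n) → Euc n :=
  fun u => (WithLp.equiv 2 _).symm
    (Fin.snoc (WithLp.equiv 2 _ u) (c * Real.sqrt (1 - ‖u‖ ^ 2)))

@[simp] lemma liftS_last (c : ℝ) (u : EuclideanSpace ℝ (Fin n)) :
    liftS n c u (Fin.last n) = c * Real.sqrt (1 - ‖u‖ ^ 2) := by
  simp [liftS]

@[simp] lemma liftS_castSucc (c : ℝ) (u : EuclideanSpace ℝ (Fin n)) (i : Fin n) :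
    liftS n c u (Fin.castSucc i) = u i := by
  simp [liftS]

def Dset (n : ℕ) : Set (EuclideanSpace ℝ (Fin n)) :=
  {u | ‖u‖ ^ 2 ≤ 1 - 1 / (n + 1)}

lemma Dset_subset_ball : Dset n ⊆ Metric.closedBall 0 1 := by
  intro u hu
  simp only [Dset, Set.mem_setOf_eq] at hu
  rw [Metric.mem_closedBall, dist_zero_right]
  nlinarith [norm_nonneg u, (by positivity : (0:ℝ) < 1 / (n + 1))]

lemma abs_norm_sq_sub_le {E : Type*} [NormedAddCommGroup E] (u v : E)
    (hu : ‖u‖ ≤ 1) (hv : ‖v‖ ≤ 1) : |‖u‖ ^ 2 - ‖v‖ ^ 2| ≤ 2 * dist u v := by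
  have habs : |‖u‖ - ‖v‖| ≤ dist u v := by
    rw [dist_eq_norm]
    exact abs_norm_sub_norm_le u v
  have h4 : |‖u‖ ^ 2 - ‖v‖ ^ 2| = |‖u‖ - ‖v‖| * (‖u‖ + ‖v‖) := by
    rw [← abs_of_nonneg (by positivity : (0:ℝ) ≤ ‖u‖ + ‖v‖), ← abs_mul]
    ring_nf
  rw [h4]
  nlinarith [abs_nonneg (‖u‖ - ‖v‖), norm_nonneg u, norm_nonneg v, dist_nonneg (x := u) (y := v)]

lemma norm_le_one_of_Dset {u : EuclideanSpace ℝ (Fin n)} (hu : u ∈ Dset n) : ‖u‖ ≤ 1 := by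
  have := Dset_subset_ball hu
  rwa [Metric.mem_closedBall, dist_zero_right] at this

lemma phi_lipschitzOn :
    ∀ u ∈ Dset n, ∀ v ∈ Dset n,
      |Real.sqrt (1 - ‖u‖ ^ 2) - Real.sqrt (1 - ‖v‖ ^ 2)| ≤ (n + 1) * dist u v := by
  intro u hu v hv
  set a := Real.sqrt (1 - ‖u‖ ^ 2) with ha
  set b := Real.sqrt (1 - ‖v‖ ^ 2) with hb
  set c := Real.sqrt (1 / (n + 1) : ℝ) with hc
  have hn1 : (0:ℝ) < 1 / (n + 1) := by positivity
  have hu' := norm_le_one_of_Dset hu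
  have hv' := norm_le_one_of_Dset hv
  have hud : (1 : ℝ) / (n+1) ≤ 1 - ‖u‖ ^ 2 := by
    have := hu; simp only [Dset, Set.mem_setOf_eq] at this; linarith
  have hvd : (1 : ℝ) / (n+1) ≤ 1 - ‖v‖ ^ 2 := by
    have := hv; simp only [Dset, Set.mem_setOf_eq] at this; linarith
  have hac : c ≤ a := Real.sqrt_le_sqrt hud
  have hbc : c ≤ b := Real.sqrt_le_sqrt hvd
  have hc0 : 0 < c := Real.sqrt_pos.mpr hn1
  have hc2 : c ^ 2 = 1 / (n + 1) := Real.sq_sqrt hn1.le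
  have ha2 : a ^ 2 = 1 - ‖u‖ ^ 2 := Real.sq_sqrt (by linarith)
  have hb2 : b ^ 2 = 1 - ‖v‖ ^ 2 := Real.sq_sqrt (by linarith)
  have key : |a - b| * (a + b) ≤ 2 * dist u v := by
    have : |a - b| * (a + b) = |a ^ 2 - b ^ 2| := by
      rw [← abs_of_nonneg (by positivity : (0:ℝ) ≤ a + b), ← abs_mul]
      ring_nf
    rw [this, ha2, hb2]
    have : |1 - ‖u‖ ^ 2 - (1 - ‖v‖ ^ 2)| = |‖v‖ ^ 2 - ‖u‖ ^ 2| := by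
      congr 1; ring
    rw [this]
    rw [dist_comm]
    exact abs_norm_sq_sub_le v u hv' hu'
  -- |a - b| ≤ (n+1) * dist
  have hcc : ((n:ℝ) + 1) * c ^ 2 = 1 := by
    rw [hc2]; field_simp
  have hc1 : c ≤ 1 := Real.sqrt_le_one.mpr (by
    rw [div_le_one (by positivity)]; linarith [Nat.cast_nonneg (α := ℝ) n])
  have hcn : 1 ≤ (n + 1) * c := by nlinarith
  nlinarith [abs_nonneg (a - b), dist_nonneg (x := u) (y := v), hc0]

lemma liftS_lipschitzOn (c : ℝ) (hc : |c| = 1) :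
    ∀ u ∈ Dset n, ∀ v ∈ Dset n,
      dist (liftS n c u) (liftS n c v) ≤ (n + 2) * dist u v := by
  intro u hu v hv
  have hsq : dist (liftS n c u) (liftS n c v) ^ 2 ≤ ((n + 2) * dist u v) ^ 2 := by
    rw [euc_dist_sq, Fin.sum_univ_castSucc]
    simp only [liftS_castSucc, liftS_last]
    have h1 : ∑ i : Fin n, (u i - v i) ^ 2 = dist u v ^ 2 := (euc_dist_sq u v).symm
    rw [h1]
    have h2 : (c * Real.sqrt (1 - ‖u‖ ^ 2) - c * Real.sqrt (1 - ‖v‖ ^ 2)) ^ 2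
        = (Real.sqrt (1 - ‖u‖ ^ 2) - Real.sqrt (1 - ‖v‖ ^ 2)) ^ 2 := by
      have : c * Real.sqrt (1 - ‖u‖ ^ 2) - c * Real.sqrt (1 - ‖v‖ ^ 2)
          = c * (Real.sqrt (1 - ‖u‖ ^ 2) - Real.sqrt (1 - ‖v‖ ^ 2)) := by ring
      rw [this, mul_pow, ← sq_abs c, hc]
      ring
    rw [h2]
    have h3 := phi_lipschitzOn u hu v hv
    have h4 : (Real.sqrt (1 - ‖u‖ ^ 2) - Real.sqrt (1 - ‖v‖ ^ 2)) ^ 2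
        ≤ ((n+1) * dist u v) ^ 2 := by
      rw [← sq_abs]
      apply pow_le_pow_left₀ (abs_nonneg _) h3
    have hd := dist_nonneg (x := u) (y := v)
    have hn : (0:ℝ) ≤ n := Nat.cast_nonneg n
    nlinarith
  have hd1 := dist_nonneg (x := liftS n c u) (y := liftS n c v)
  have hd := dist_nonneg (x := u) (y := v)
  have hn : (0:ℝ) ≤ n := Nat.cast_nonneg n
  have h := Real.sqrt_le_sqrt hsq
  rwa [Real.sqrt_sq hd1, Real.sqrt_sq (by positivity)] at h

def Ppiece (n : ℕ) (c : ℝ) : Set (Euc n) :=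
  {x | ‖x‖ = 1 ∧ Real.sqrt (1 / (n + 1) : ℝ) ≤ c * x (Fin.last n)}

lemma Ppiece_subset (c : ℝ) (hc : c = 1 ∨ c = -1) :
    Ppiece n c ⊆ liftS n c '' Dset n := by
  rintro x ⟨hx1, hx2⟩
  have hc2 : c ^ 2 = 1 := by rcases hc with h | h <;> simp [h]
  have hst : (0:ℝ) ≤ Real.sqrt (1 / (n + 1) : ℝ) := Real.sqrt_nonneg _
  have hlast2 : (1:ℝ) / (n + 1) ≤ x (Fin.last n) ^ 2 := by
    have h1 : Real.sqrt (1 / (n + 1) : ℝ) ^ 2 ≤ (c * x (Fin.last n)) ^ 2 :=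
      pow_le_pow_left₀ hst hx2 2
    rw [Real.sq_sqrt (by positivity : (0:ℝ) ≤ 1 / (n+1))] at h1
    calc (1:ℝ) / (n+1) ≤ (c * x (Fin.last n)) ^ 2 := h1
      _ = x (Fin.last n) ^ 2 := by rw [mul_pow, hc2, one_mul]
  refine ⟨projE n x, ?_, ?_⟩
  · simp only [Dset, Set.mem_setOf_eq]
    have := norm_sq_split x
    rw [hx1] at this
    nlinarith
  · -- liftS c (projE x) = x
    ext j
    by_cases hj : j = Fin.last n
    · subst hj
      rw [liftS_last]
      have hns := norm_sq_split x
      rw [hx1] at hns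
      have h5 : 1 - ‖projE n x‖ ^ 2 = x (Fin.last n) ^ 2 := by nlinarith
      rw [h5, Real.sqrt_sq_eq_abs]
      have h6 : 0 ≤ c * x (Fin.last n) := le_trans hst hx2
      have h7 : |x (Fin.last n)| = c * x (Fin.last n) := by
        rcases hc with h | h
        · rw [h, one_mul] at h6 ⊢; exact abs_of_nonneg h6
        · rw [h] at h6 ⊢
          rw [abs_of_nonpos (by linarith)]; ring
      rw [h7]
      rcases hc with h | h <;> rw [h] <;> ring
    · obtain ⟨i, rfl⟩ := Fin.exists_castSucc_eq.mpr hj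
      rw [liftS_castSucc]
      simp

lemma Ppiece_finite (c : ℝ) (hc : c = 1 ∨ c = -1) :
    (μH[(n:ℝ)] : Measure (Euc n)) (Ppiece n c) < ⊤ := by
  have := haar_euc n
  have habs : |c| = 1 := by rcases hc with h | h <;> simp [h]
  have hlip : LipschitzOnWith ((n+2 : NNReal)) (liftS n c) (Dset n) := by
    apply LipschitzOnWith.of_dist_le_mul
    intro u hu v hv
    have := liftS_lipschitzOn c habs u hu v hv
    calc dist (liftS n c u) (liftS n c v) ≤ ((n:ℝ) + 2) * dist u v := this
      _ = ((n+2 : NNReal) : ℝ) * dist u v := by push_cast; ring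
  have h1 : (μH[(n:ℝ)] : Measure (Euc n)) (Ppiece n c)
      ≤ μH[(n:ℝ)] (liftS n c '' Dset n) := measure_mono (Ppiece_subset c hc)
  have h2 := hlip.hausdorffMeasure_image_le (by positivity : (0:ℝ) ≤ (n:ℝ))
  have h3 : (μH[(n:ℝ)] : Measure (EuclideanSpace ℝ (Fin n))) (Dset n)
      ≤ μH[(n:ℝ)] (Metric.closedBall (0 : EuclideanSpace ℝ (Fin n)) 1) := measure_mono Dset_subset_ball
  have h4 : (μH[(n:ℝ)] : Measure (EuclideanSpace ℝ (Fin n)))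
      (Metric.closedBall (0 : EuclideanSpace ℝ (Fin n)) 1) < ⊤ :=
    (isCompact_closedBall (0 : EuclideanSpace ℝ (Fin n)) 1).measure_lt_top
  calc (μH[(n:ℝ)] : Measure (Euc n)) (Ppiece n c)
      ≤ μH[(n:ℝ)] (liftS n c '' Dset n) := h1
    _ ≤ ((n+2 : NNReal) : ENNReal) ^ (n:ℝ) * μH[(n:ℝ)] (Dset n) := h2
    _ < ⊤ := by
        apply ENNReal.mul_lt_top
        · exact ENNReal.rpow_lt_top_of_nonneg (by positivity) (by simp)
        · exact lt_of_le_of_lt h3 h4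

lemma exists_big_coord {x : Euc n} (hx : ‖x‖ = 1) :
    ∃ j : Fin (n+1), (1:ℝ)/(n+1) ≤ x j ^ 2 := by
  by_contra h
  push_neg at h
  have hsum : ∑ j, x j ^ 2 < ∑ _j : Fin (n+1), (1:ℝ)/(n+1) :=
    Finset.sum_lt_sum_of_nonempty ⟨0, Finset.mem_univ 0⟩ (fun j _ => h j)
  rw [Finset.sum_const, Finset.card_univ, Fintype.card_fin] at hsum
  have h1 : ∑ j, x j ^ 2 = 1 := by
    have := euc_norm_sq x
    rw [hx] at this; linarith [this]
  rw [h1, nsmul_eq_mul] at hsum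
  have h2 : ((n+1:ℕ):ℝ) * ((1:ℝ)/((n:ℝ)+1)) = 1 := by
    push_cast
    field_simp
  rw [h2] at hsum
  exact lt_irrefl _ hsum

lemma sphere_finite : (μH[(n:ℝ)] : Measure (Euc n)) (unitSphere n) < ⊤ := by
  classical
  set A : Fin (n+1) → (Euc n ≃ₗᵢ[ℝ] Euc n) := fun j =>
    LinearIsometryEquiv.piLpCongrLeft 2 ℝ ℝ (Equiv.swap (Fin.last n) j) with hA
  set PP : Set (Euc n) := Ppiece n 1 ∪ Ppiece n (-1) with hPP
  have hcover : unitSphere n ⊆ ⋃ j, (A j).symm '' PP := by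
    intro x hx
    have hx1 : ‖x‖ = 1 := by
      simpa [unitSphere, mem_sphere_iff_norm] using hx
    obtain ⟨j, hj⟩ := exists_big_coord hx1
    refine Set.mem_iUnion.mpr ⟨j, (A j) x, ?_, ?_⟩
    · have hyn : ‖(A j) x‖ = 1 := by rw [(A j).norm_map, hx1]
      have hylast : ((A j) x) (Fin.last n) = x j := by
        rw [hA]
        simp only [LinearIsometryEquiv.piLpCongrLeft_apply]
        rw [Equiv.piCongrLeft'_apply, Equiv.symm_swap, Equiv.swap_apply_left]
      have habs : Real.sqrt (1/(n+1) : ℝ) ≤ |x j| := by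
        rw [← Real.sqrt_sq_eq_abs]
        exact Real.sqrt_le_sqrt hj
      rcases abs_cases (x j) with ⟨he, _⟩ | ⟨he, _⟩
      · left
        exact ⟨hyn, by rw [one_mul, hylast, ← he]; exact habs⟩
      · right
        refine ⟨hyn, ?_⟩
        rw [hylast]
        rw [he] at habs
        linarith [habs]
    · exact (A j).symm_apply_apply x
  calc (μH[(n:ℝ)] : Measure (Euc n)) (unitSphere n)
      ≤ μH[(n:ℝ)] (⋃ j, (A j).symm '' PP) := measure_mono hcover
    _ ≤ ∑' j : Fin (n+1), μH[(n:ℝ)] ((A j).symm '' PP) := measure_iUnion_le _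
    _ ≤ ∑' _j : Fin (n+1), ((μH[(n:ℝ)] : Measure (Euc n)) (Ppiece n 1)
          + μH[(n:ℝ)] (Ppiece n (-1))) := by
        apply ENNReal.tsum_le_tsum
        intro j
        have h1 := ((A j).symm.isometry.lipschitz).hausdorffMeasure_image_le
          (by positivity : (0:ℝ) ≤ (n:ℝ)) PP
        have h2 : (μH[(n:ℝ)] : Measure (Euc n)) PP
            ≤ (μH[(n:ℝ)] : Measure (Euc n)) (Ppiece n 1) + μH[(n:ℝ)] (Ppiece n (-1)) :=
          measure_union_le _ _
        calc (μH[(n:ℝ)] : Measure (Euc n)) ((A j).symm '' PP)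
            ≤ (μH[(n:ℝ)] : Measure (Euc n)) PP := by simpa using h1
          _ ≤ _ := h2
    _ < ⊤ := by
        rw [tsum_fintype]
        simp only [Finset.sum_const, Finset.card_univ, Fintype.card_fin, nsmul_eq_mul]
        apply ENNReal.mul_lt_top (by simp)
        exact ENNReal.add_lt_top.mpr ⟨Ppiece_finite 1 (Or.inl rfl),
          Ppiece_finite (-1) (Or.inr rfl)⟩

lemma hemi_finite : (μH[(n:ℝ)] : Measure (Euc n)) (upperHemi n) < ⊤ := by
  apply lt_of_le_of_lt (measure_mono _) sphere_finite
  intro x hx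
  exact hx.1

lemma contLast : Continuous fun x : Euc n => x (Fin.last n) :=
  (EuclideanSpace.proj (𝕜 := ℝ) (Fin.last n)).continuous

lemma hemi_meas : MeasurableSet (upperHemi n) := by
  have h1 : IsClosed (unitSphere n) := Metric.isClosed_sphere
  have h2 : IsClosed {x : Euc n | 0 ≤ x (Fin.last n)} :=
    isClosed_le continuous_const contLast
  exact (h1.inter h2).measurableSet

lemma northPole_mem : northPole n ∈ upperHemi n := by
  rw [mem_hemi_iff]
  constructor
  · rw [northPole, EuclideanSpace.norm_single, norm_one]
  · rw [northPole, EuclideanSpace.single_apply]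
    simp

lemma hemi_pos : 0 < (μH[(n:ℝ)] : Measure (Euc n)) (upperHemi n) := by
  have := haar_euc n
  have h1 := lemmaC (northPole_mem (n := n)) one_pos le_rfl
  have h2 : 0 < (μH[(n:ℝ)] : Measure (EuclideanSpace ℝ (Fin n)))
      (Metric.closedBall 0 ((1:ℝ)^2/6)) :=
    Metric.measure_closedBall_pos _ _ (by norm_num)
  calc (0:ENNReal) < _ := h2
    _ ≤ _ := h1
    _ ≤ (μH[(n:ℝ)] : Measure (Euc n)) (upperHemi n) :=
        measure_mono Set.inter_subset_left

lemma sigma_apply {S : Set (Euc n)} (hS : MeasurableSet S) :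
    sigmaPlus n S = ((μH[(n:ℝ)] : Measure (Euc n)) (upperHemi n))⁻¹
      * (μH[(n:ℝ)] : Measure (Euc n)) (S ∩ upperHemi n) := by
  rw [sigmaPlus, Measure.smul_apply, Measure.restrict_apply hS, smul_eq_mul]

lemma sigma_prob : IsProbabilityMeasure (sigmaPlus n) := by
  constructor
  rw [sigma_apply MeasurableSet.univ, Set.univ_inter]
  exact ENNReal.inv_mul_cancel (hemi_pos).ne' (hemi_finite).ne

lemma sigma_ae_hemi : ∀ᵐ x ∂(sigmaPlus n), x ∈ upperHemi n := by
  rw [ae_iff]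
  have : {x : Euc n | ¬ x ∈ upperHemi n} = (upperHemi n)ᶜ := rfl
  rw [this, sigma_apply hemi_meas.compl, Set.compl_inter_self, measure_empty, mul_zero]

lemma geod_le_of_inner {x y : Euc n} {r : ℝ} (hr0 : 0 ≤ r) (hrπ : r ≤ π)
    (h : Real.cos r ≤ (inner ℝ x y : ℝ)) : geod x y ≤ r := by
  rw [geod]
  calc Real.arccos (inner ℝ x y) = π/2 - Real.arcsin (inner ℝ x y) :=
        Real.arccos_eq_pi_div_two_sub_arcsin _
    _ ≤ π/2 - Real.arcsin (Real.cos r) := by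
        have := Real.monotone_arcsin h
        linarith
    _ = Real.arccos (Real.cos r) := (Real.arccos_eq_pi_div_two_sub_arcsin _).symm
    _ = r := Real.arccos_cos hr0 hrπ

lemma coord_pair_le {x : Euc n} (hn : 1 ≤ n) (hx : ‖x‖ = 1) :
    x 0 ^ 2 + x (Fin.last n) ^ 2 ≤ 1 := by
  have hne : (0 : Fin (n+1)) ≠ Fin.last n := by
    simp only [Ne, Fin.ext_iff, Fin.val_last, Fin.val_zero]
    omega
  have h1 : ∑ j ∈ ({0, Fin.last n} : Finset (Fin (n+1))), x j ^ 2 ≤ ∑ j, x j ^ 2 :=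
    Finset.sum_le_sum_of_subset_of_nonneg (Finset.subset_univ _)
      (fun j _ _ => sq_nonneg _)
  rw [Finset.sum_pair hne] at h1
  have h2 := euc_norm_sq x
  rw [hx] at h2
  simp only [one_pow] at h2
  linarith [h1, h2.symm.le, h2.le]

set_option maxHeartbeats 1000000 in
/-- No uniform Lipschitz bound holds for bijective transport maps from
`σ_+` onto probability measures with positive continuous densities on the half-sphere: for
every `L > 0` there is a probability measure `ν` with a positive continuous density w.r.t.
`σ_+` such that no bijective `L`-Lipschitz map `T : S^n_+ → S^n_+` pushes `σ_+` to `ν`. -/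
theorem stmt17 (n : ℕ) (hn : 2 ≤ n) (L : ℝ) (hL : 0 < L) :
    ∃ ν : Measure (Euc n), IsProbabilityMeasure ν ∧
      (∃ g : Euc n → ℝ, ContinuousOn g (upperHemi n) ∧ (∀ x ∈ upperHemi n, 0 < g x) ∧
        ν = (sigmaPlus n).withDensity (fun x => ENNReal.ofReal (g x))) ∧
      ¬ ∃ T : Euc n → Euc n, (∀ x ∈ upperHemi n, T x ∈ upperHemi n) ∧
        Set.InjOn T (upperHemi n) ∧
        (∀ y ∈ upperHemi n, ∃ x ∈ upperHemi n, T x = y) ∧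
        (∀ x ∈ upperHemi n, ∀ y ∈ upperHemi n, geod (T x) (T y) ≤ L * geod x y) ∧
        Measure.map T (sigmaPlus n) = ν := by
  classical
  haveI hprobσ : IsProbabilityMeasure (sigmaPlus n) := sigma_prob
  have hπ3 : (3:ℝ) < π := Real.pi_gt_three
  -- radius r
  set r : ℝ := min 1 (π / (4 * L)) with hr
  have hr0 : 0 < r := lt_min one_pos (by positivity)
  have hr1 : r ≤ 1 := min_le_left _ _
  have hrπ : r ≤ π := by linarith
  have hLr : L * r ≤ π / 4 := by
    have h1 : r ≤ π / (4 * L) := min_le_right _ _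
    calc L * r ≤ L * (π / (4 * L)) := by
          apply mul_le_mul_of_nonneg_left h1 hL.le
      _ = π / 4 := by field_simp
  have hcosr : Real.cos r < 1 := by
    have h1 : Real.cos r ≤ 1 := Real.cos_le_one r
    rcases lt_or_eq_of_le h1 with h | h
    · exact h
    · exfalso
      have := (Real.cos_eq_one_iff_of_lt_of_lt
        (show -(2*π) < r by linarith) (show r < 2*π by linarith)).mp h
      linarith
  -- radius δ
  set δ : ℝ := min 1 (Real.sqrt (2 * (1 - Real.cos r))) with hδ
  have hδ0 : 0 < δ := lt_min one_pos (Real.sqrt_pos.mpr (by linarith))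
  have hδ1 : δ ≤ 1 := min_le_left _ _
  have hδ2 : δ ^ 2 ≤ 2 * (1 - Real.cos r) := by
    have h1 : δ ≤ Real.sqrt (2 * (1 - Real.cos r)) := min_le_right _ _
    have h2 : δ ^ 2 ≤ Real.sqrt (2 * (1 - Real.cos r)) ^ 2 :=
      pow_le_pow_left₀ hδ0.le h1 2
    rwa [Real.sq_sqrt (by linarith)] at h2
  -- constants
  have := haar_euc n
  set C : ENNReal := (μH[(n:ℝ)] : Measure (EuclideanSpace ℝ (Fin n)))
    (Metric.closedBall 0 (δ^2/6)) with hC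
  have hC0 : 0 < C := Metric.measure_closedBall_pos _ _ (by positivity)
  have hCtop : C ≠ ⊤ := by
    have h1 := lemmaC (northPole_mem (n := n)) hδ0 hδ1
    exact (lt_of_le_of_lt (h1.trans (measure_mono Set.inter_subset_left)) hemi_finite).ne
  set κ : ENNReal := ((μH[(n:ℝ)] : Measure (Euc n)) (upperHemi n))⁻¹ * C with hκ
  have hκ0 : 0 < κ := ENNReal.mul_pos (ENNReal.inv_ne_zero.mpr hemi_finite.ne) hC0.ne'
  have hκtop : κ ≠ ⊤ :=
    ENNReal.mul_ne_top (ENNReal.inv_ne_top.mpr hemi_pos.ne') hCtop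
  set ε : ℝ := min (1/2) (κ.toReal / 2) with hε
  have hκtR : 0 < κ.toReal := ENNReal.toReal_pos hκ0.ne' hκtop
  have hε0 : 0 < ε := lt_min (by norm_num) (by linarith)
  have hε1 : ε ≤ 1/2 := min_le_left _ _
  have hεκ : ENNReal.ofReal ε < κ := by
    calc ENNReal.ofReal ε ≤ ENNReal.ofReal (κ.toReal / 2) :=
          ENNReal.ofReal_le_ofReal (min_le_right _ _)
      _ < ENNReal.ofReal κ.toReal := by
          rw [ENNReal.ofReal_lt_ofReal_iff hκtR]
          linarith
      _ = κ := ENNReal.ofReal_toReal hκtop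
  -- the bump function
  set capC : Euc n → ℝ := fun x => max (x (Fin.last n) - Real.sqrt 2 / 2) 0 with hcapC
  have hcapC_cont : Continuous capC := ((contLast (n := n)).sub continuous_const).max continuous_const
  have hcapC_nonneg : ∀ x, 0 ≤ capC x := fun x => le_max_right _ _
  have hsqrt2 : Real.sqrt 2 ≤ 1.6 := by
    nlinarith [Real.sq_sqrt (by norm_num : (0:ℝ) ≤ 2), Real.sqrt_nonneg 2]
  have hsqrt2' : (0:ℝ) ≤ Real.sqrt 2 := Real.sqrt_nonneg 2
  set I : ENNReal := ∫⁻ x, ENNReal.ofReal (capC x) ∂(sigmaPlus n) with hI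
  have hIle : I ≤ 1 := by
    have h1 : ∀ᵐ x ∂(sigmaPlus n), ENNReal.ofReal (capC x) ≤ 1 := by
      filter_upwards [sigma_ae_hemi] with x hx
      have hx1 : ‖x‖ = 1 := (mem_hemi_iff.mp hx).1
      have hxl : x (Fin.last n) ≤ 1 := by
        have := abs_coord_le_norm x (Fin.last n)
        rw [hx1] at this
        exact (le_abs_self _).trans this
      have : capC x ≤ 1 := by
        rw [hcapC]
        apply max_le (by linarith) zero_le_one
      calc ENNReal.ofReal (capC x) ≤ ENNReal.ofReal 1 := ENNReal.ofReal_le_ofReal this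
        _ = 1 := ENNReal.ofReal_one
    calc I ≤ ∫⁻ _x, 1 ∂(sigmaPlus n) := lintegral_mono_ae h1
      _ = 1 := by simp
  have hItop : I ≠ ⊤ := (lt_of_le_of_lt hIle (by norm_num)).ne
  have hI0 : I ≠ 0 := by
    set capset : Set (Euc n) := upperHemi n ∩ Metric.closedBall (northPole n) (1/10)
      with hcapset
    have hcapmeas : MeasurableSet capset :=
      hemi_meas.inter measurableSet_closedBall
    have hpt : ∀ x ∈ capset, (1:ℝ)/10 ≤ capC x := by
      rintro x ⟨hxH, hxB⟩
      have hd : dist x (northPole n) ≤ 1/10 := Metric.mem_closedBall.mp hxB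
      have hco : |x (Fin.last n) - 1| ≤ 1/10 := by
        have h1 := abs_coord_le_norm (x - northPole n) (Fin.last n)
        have h2 : (x - northPole n) (Fin.last n)
            = x (Fin.last n) - 1 := by
          have : (northPole n) (Fin.last n) = 1 := by
            rw [northPole, EuclideanSpace.single_apply]; simp
          simp [this]
        rw [h2, ← dist_eq_norm] at h1
        exact h1.trans hd
      have h3 : (9:ℝ)/10 ≤ x (Fin.last n) := by
        rcases abs_le.mp hco with ⟨h4, _⟩
        linarith
      rw [hcapC]
      simp only
      rw [le_max_iff]
      left
      linarith
    have hlower : ENNReal.ofReal (1/10) * sigmaPlus n capset ≤ I := by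
      rw [hI]
      have h1 : ∀ x, capset.indicator (fun _ => ENNReal.ofReal (1/10)) x
          ≤ ENNReal.ofReal (capC x) := by
        intro x
        by_cases hx : x ∈ capset
        · rw [Set.indicator_of_mem hx]
          exact ENNReal.ofReal_le_ofReal (hpt x hx)
        · rw [Set.indicator_of_notMem hx]
          exact zero_le
      calc ENNReal.ofReal (1/10) * sigmaPlus n capset
          = ∫⁻ x, capset.indicator (fun _ => ENNReal.ofReal (1/10)) x ∂(sigmaPlus n) := by
            rw [lintegral_indicator hcapmeas]
            simp
        _ ≤ _ := lintegral_mono h1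
    have hcs0 : 0 < sigmaPlus n capset := by
      rw [sigma_apply hcapmeas]
      apply ENNReal.mul_pos (ENNReal.inv_ne_zero.mpr hemi_finite.ne)
      have h5 := lemmaC (northPole_mem (n := n)) (show (0:ℝ) < 1/10 by norm_num)
        (show (1:ℝ)/10 ≤ 1 by norm_num)
      have h6 : 0 < (μH[(n:ℝ)] : Measure (EuclideanSpace ℝ (Fin n)))
          (Metric.closedBall 0 (((1:ℝ)/10)^2/6)) :=
        Metric.measure_closedBall_pos _ _ (by norm_num)
      have h7 : capset ∩ upperHemi n
          = upperHemi n ∩ Metric.closedBall (northPole n) (1/10) := by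
        rw [hcapset]
        ext z; constructor
        · rintro ⟨⟨h8, h9⟩, _⟩; exact ⟨h8, h9⟩
        · rintro ⟨h8, h9⟩; exact ⟨⟨h8, h9⟩, h8⟩
      rw [h7]
      exact (lt_of_lt_of_le h6 h5).ne'
    intro hI0'
    rw [hI0'] at hlower
    have : ENNReal.ofReal (1/10) * sigmaPlus n capset = 0 := le_antisymm hlower zero_le
    rcases mul_eq_zero.mp this with h | h
    · rw [ENNReal.ofReal_eq_zero] at h
      linarith
    · exact hcs0.ne' h
  have hItR : 0 < I.toReal := ENNReal.toReal_pos hI0 hItop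
  set M : ℝ := (1 - ε) / I.toReal with hM
  have hM0 : 0 ≤ M := div_nonneg (by linarith) hItR.le
  set g : Euc n → ℝ := fun x => ε + M * capC x with hg
  set ν : Measure (Euc n) :=
    (sigmaPlus n).withDensity (fun x => ENNReal.ofReal (g x)) with hν
  have hgmeas : Measurable fun x => ENNReal.ofReal (g x) :=
    ((continuous_const.add (continuous_const.mul hcapC_cont)).measurable).ennreal_ofReal
  have hν_univ : ν Set.univ = 1 := by
    rw [hν, withDensity_apply _ MeasurableSet.univ, Measure.restrict_univ]
    have h1 : ∀ x, ENNReal.ofReal (g x)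
        = ENNReal.ofReal ε + ENNReal.ofReal M * ENNReal.ofReal (capC x) := by
      intro x
      rw [hg]
      simp only
      rw [ENNReal.ofReal_add hε0.le (mul_nonneg hM0 (hcapC_nonneg x)),
        ENNReal.ofReal_mul hM0]
    simp_rw [h1]
    rw [lintegral_add_left measurable_const,
      lintegral_const_mul _ (hcapC_cont.measurable.ennreal_ofReal), lintegral_const]
    rw [measure_univ, mul_one, ← hI]
    have h2 : ENNReal.ofReal M * I = ENNReal.ofReal (1 - ε) := by
      rw [← ENNReal.ofReal_toReal hItop, ← ENNReal.ofReal_mul hM0, hM,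
        div_mul_cancel₀ _ hItR.ne']
    rw [h2, ← ENNReal.ofReal_add hε0.le (by linarith), add_sub_cancel,
      ENNReal.ofReal_one]
  haveI hprobν : IsProbabilityMeasure ν := ⟨hν_univ⟩
  refine ⟨ν, hprobν, ⟨g, ?_, ?_, hν⟩, ?_⟩
  · exact (continuous_const.add (continuous_const.mul hcapC_cont)).continuousOn
  · intro x _
    rw [hg]
    have := hcapC_nonneg x
    simp only
    nlinarith
  rintro ⟨T, hmaps, hinj, hsurj, hlip, hmap⟩
  by_cases hTm : AEMeasurable T (sigmaPlus n)
  · -- main case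
    set y₀ : Euc n := EuclideanSpace.single (0 : Fin (n+1)) (1:ℝ) with hy₀def
    have hy₀ : y₀ ∈ upperHemi n := by
      rw [mem_hemi_iff]
      constructor
      · rw [hy₀def, EuclideanSpace.norm_single, norm_one]
      · rw [hy₀def, EuclideanSpace.single_apply]
        have : (Fin.last n) ≠ (0 : Fin (n+1)) := by
          simp only [Ne, Fin.ext_iff, Fin.val_last, Fin.val_zero]
          omega
        simp [this]
    obtain ⟨x₀, hx₀, hTx₀⟩ := hsurj y₀ hy₀
    set Ball : Set (Euc n) := {y : Euc n | Real.sqrt 2 / 2 ≤ (inner ℝ y y₀ : ℝ)} with hBall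
    have hBall_meas : MeasurableSet Ball := by
      apply measurableSet_le measurable_const
      exact (Continuous.inner continuous_id continuous_const).measurable
    have hinner_y₀ : ∀ y : Euc n, (inner ℝ y y₀ : ℝ) = y 0 := by
      intro y
      rw [hy₀def, EuclideanSpace.inner_single_right]
      simp
    have hsubset : upperHemi n ∩ Metric.closedBall x₀ δ ⊆ T ⁻¹' Ball := by
      rintro x ⟨hxH, hxB⟩
      have hx1 : ‖x‖ = 1 := (mem_hemi_iff.mp hxH).1
      have hx₀1 : ‖x₀‖ = 1 := (mem_hemi_iff.mp hx₀).1
      have hdist : ‖x - x₀‖ ≤ δ := by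
        rw [← dist_eq_norm]
        exact Metric.mem_closedBall.mp hxB
      have hinner : Real.cos r ≤ (inner ℝ x x₀ : ℝ) := by
        have h1 : ‖x - x₀‖ ^ 2 = ‖x‖^2 - 2 * (inner ℝ x x₀ : ℝ) + ‖x₀‖^2 :=
          norm_sub_sq_real x x₀
        rw [hx1, hx₀1] at h1
        have h2 : ‖x - x₀‖ ^ 2 ≤ δ ^ 2 :=
          pow_le_pow_left₀ (norm_nonneg _) hdist 2
        nlinarith
      have hgeod : geod x x₀ ≤ r := geod_le_of_inner hr0.le hrπ hinner
      have h3 : geod (T x) (T x₀) ≤ L * geod x x₀ := hlip x hxH x₀ hx₀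
      have h4 : geod (T x) y₀ ≤ π / 4 := by
        rw [← hTx₀]
        calc geod (T x) (T x₀) ≤ L * geod x x₀ := h3
          _ ≤ L * r := mul_le_mul_of_nonneg_left hgeod hL.le
          _ ≤ π / 4 := hLr
      rw [geod] at h4
      exact Real.arccos_le_pi_div_four.mp h4
    have hlow : κ ≤ sigmaPlus n (T ⁻¹' Ball) := by
      have h1 : sigmaPlus n (upperHemi n ∩ Metric.closedBall x₀ δ)
          ≤ sigmaPlus n (T ⁻¹' Ball) := measure_mono hsubset
      have h2 : κ ≤ sigmaPlus n (upperHemi n ∩ Metric.closedBall x₀ δ) := by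
        rw [sigma_apply (hemi_meas.inter measurableSet_closedBall), hκ]
        apply mul_le_mul_right
        have h3 : upperHemi n ∩ Metric.closedBall x₀ δ ∩ upperHemi n
            = upperHemi n ∩ Metric.closedBall x₀ δ := by
          ext z; constructor
          · rintro ⟨h4, _⟩; exact h4
          · rintro ⟨h4, h5⟩; exact ⟨⟨h4, h5⟩, h4⟩
        rw [h3]
        exact lemmaC hx₀ hδ0 hδ1
      exact h2.trans h1
    have hup : ν Ball ≤ ENNReal.ofReal ε := by
      rw [hν, withDensity_apply _ hBall_meas]
      have h1 : ∀ᵐ x ∂((sigmaPlus n).restrict Ball),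
          ENNReal.ofReal (g x) ≤ ENNReal.ofReal ε := by
        filter_upwards [ae_restrict_mem hBall_meas,
          ae_restrict_of_ae (μ := sigmaPlus n) (s := Ball) sigma_ae_hemi]
          with x hxB hxH
        have hx1 : ‖x‖ = 1 := (mem_hemi_iff.mp hxH).1
        have hx0 : Real.sqrt 2 / 2 ≤ x 0 := by
          have := hxB
          rw [hBall, Set.mem_setOf_eq, hinner_y₀ x] at this
          exact this
        have hx0sq : (1:ℝ)/2 ≤ x 0 ^ 2 := by
          have h2 : (Real.sqrt 2 / 2) ^ 2 ≤ x 0 ^ 2 :=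
            pow_le_pow_left₀ (by positivity) hx0 2
          have h3 : (Real.sqrt 2 / 2) ^ 2 = 1/2 := by
            rw [div_pow, Real.sq_sqrt (by norm_num : (0:ℝ) ≤ 2)]
            norm_num
          linarith
        have hpair := coord_pair_le (by omega : 1 ≤ n) hx1
        have hlastsq : x (Fin.last n) ^ 2 ≤ 1/2 := by linarith
        have hlast : x (Fin.last n) ≤ Real.sqrt 2 / 2 := by
          nlinarith [hlastsq, hsqrt2', Real.sq_sqrt (show (0:ℝ) ≤ 2 by norm_num)]
        have hcap0 : capC x = 0 := by
          rw [hcapC]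
          simp only
          rw [max_eq_right]
          linarith
        have : g x = ε := by rw [hg]; simp only; rw [hcap0, mul_zero, add_zero]
        rw [this]
      calc ∫⁻ x in Ball, ENNReal.ofReal (g x) ∂(sigmaPlus n)
          ≤ ∫⁻ _x in Ball, ENNReal.ofReal ε ∂(sigmaPlus n) := lintegral_mono_ae h1
        _ = ENNReal.ofReal ε * sigmaPlus n Ball := setLIntegral_const _ _
        _ ≤ ENNReal.ofReal ε * 1 := by
            apply mul_le_mul_right
            exact prob_le_one
        _ = ENNReal.ofReal ε := mul_one _
    have heq : sigmaPlus n (T ⁻¹' Ball) = ν Ball := by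
      rw [← hmap, Measure.map_apply_of_aemeasurable hTm hBall_meas]
    have : κ ≤ ENNReal.ofReal ε := by
      calc κ ≤ sigmaPlus n (T ⁻¹' Ball) := hlow
        _ = ν Ball := heq
        _ ≤ ENNReal.ofReal ε := hup
    exact absurd (lt_of_le_of_lt this hεκ) (lt_irrefl κ)
  · -- non-measurable case
    rw [Measure.map_of_not_aemeasurable hTm] at hmap
    have h1 : ν Set.univ = 0 := by rw [← hmap]; simp
    rw [hν_univ] at h1
    exact one_ne_zero h1

end
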